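/- Let R be a ring. Every simple left R-module is either a small module or injective. -/

import Mathlib

universe u

/-- A left `R`-module `K` is a *small module* if there exist a left `R`-module `L` and an
injective `R`-linear map `f : K → L` whose image is a superfluous submodule of `L`. -/
def IsSmallModule (R : Type u) [Ring R] (K : Type u) [AddCommGroup K] [Module R K] : Prop :=
  ∃ (L : Type u) (_ : AddCommGroup L) (_ : Module R L) (f : K →ₗ[R] L),
    Function.Injective f ∧
      ∀ X : Submodule R L, LinearMap.range f ⊔ X = ⊤ → X = ⊤

/-- A retract of an injective module is injective. -/
lemma injective_of_retract (R : Type u) [Ring R] (M E : Type u) [AddCommGroup M] [Module R M]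
    [AddCommGroup E] [Module R E] (f : M →ₗ[R] E) (r : E →ₗ[R] M)
    (hrf : ∀ m, r (f m) = m) (hE : Module.Injective R E) : Module.Injective R M := by
  constructor
  intro X Y _ _ _ _ i hi g
  obtain ⟨h, hh⟩ := hE.out i hi (f ∘ₗ g)
  exact ⟨r ∘ₗ h, fun x => by simp [hh x, hrf]⟩

/-- Every simple left `R`-module is either a small module or injective. -/
theorem stmt_18 (R : Type u) [Ring R] :
    ∀ (M : Type u) [AddCommGroup M] [Module R M], IsSimpleModule R M →
      IsSmallModule R M ∨ Module.Injective R M := by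
  intro M _ _ hsimp
  haveI : CategoryTheory.EnoughInjectives (ModuleCat.{u} R) :=
    ModuleCat.enoughInjectives.{u} R
  set E : ModuleCat.{u} R := CategoryTheory.Injective.under (ModuleCat.of R M)
  have hEinj : Module.Injective R E :=
    Module.injective_module_of_injective_object R E
      (inj := CategoryTheory.Injective.injective_under (ModuleCat.of R M))
  let f : M →ₗ[R] E := (CategoryTheory.Injective.ι (ModuleCat.of R M)).hom
  have hf : Function.Injective f :=
    (ModuleCat.mono_iff_injective (CategoryTheory.Injective.ι (ModuleCat.of R M))).mp (CategoryTheory.Injective.ι_mono _)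
  by_cases hsmall : ∀ X : Submodule R E, LinearMap.range f ⊔ X = ⊤ → X = ⊤
  · exact Or.inl ⟨E, inferInstance, inferInstance, f, hf, hsmall⟩
  · right
    push_neg at hsmall
    obtain ⟨X, hX, hXne⟩ := hsmall
    have hatom : IsAtom (LinearMap.range f) := by
      rw [← isSimpleModule_iff_isAtom]
      exact (IsSimpleModule.congr (LinearEquiv.ofInjective f hf).symm)
    have hinf : LinearMap.range f ⊓ X = ⊥ := by
      rcases hatom.le_iff.mp (inf_le_left : LinearMap.range f ⊓ X ≤ _) with h | h
      · exact h
      · exact absurd (by rw [← hX, sup_eq_right.mpr (le_trans h.ge inf_le_right)]) hXne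
    have hcompl : IsCompl (LinearMap.range f) X := ⟨disjoint_iff.mpr hinf, codisjoint_iff.mpr hX⟩
    let proj := (LinearMap.range f).linearProjOfIsCompl X hcompl
    let e := LinearEquiv.ofInjective f hf
    refine injective_of_retract R M E f (e.symm.toLinearMap ∘ₗ proj) (fun m => ?_) hEinj
    have : proj (f m) = ⟨f m, LinearMap.mem_range_self f m⟩ :=
      Submodule.linearProjOfIsCompl_apply_left hcompl ⟨f m, LinearMap.mem_range_self f m⟩
    simp only [LinearMap.comp_apply, this, LinearEquiv.coe_coe]
    exact e.symm_apply_eq.mpr rfl
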